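/- Let h_a, h_b be independent identically distributed Gamma random variables with shape m ≥ 1 (m a positive integer, or real m ≥ 1) and scale 1/m. Then lim_{θ → 0+} P(h_a < θ h_b) / θ^m = Γ(2m) / (m Γ(m)^2). -/

import Mathlib

open MeasureTheory ProbabilityTheory Real Filter

lemma aux_lintegral_rpow (c : ℝ) (hc : 0 ≤ c) {p t : ℝ} (hp : 0 ≤ p) (ht : 0 ≤ t) :
    ∫⁻ x in Set.Ico 0 t, ENNReal.ofReal (c * x ^ p) =
      ENNReal.ofReal (c * (t ^ (p + 1) / (p + 1))) := by
  have hint : IntervalIntegrable (fun x : ℝ => c * x ^ p) volume 0 t :=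
    (intervalIntegral.intervalIntegrable_rpow' (by linarith)).const_mul c
  have hIco : IntegrableOn (fun x : ℝ => c * x ^ p) (Set.Ico 0 t) volume :=
    (hint.1).congr_set_ae Ico_ae_eq_Ioc
  have hnn : 0 ≤ᵐ[volume.restrict (Set.Ico 0 t)] fun x : ℝ => c * x ^ p := by
    refine (ae_restrict_iff' measurableSet_Ico).mpr (ae_of_all _ fun x hx => ?_)
    exact mul_nonneg hc (Real.rpow_nonneg hx.1 p)
  rw [← ofReal_integral_eq_lintegral_ofReal hIco hnn]
  congr 1
  rw [setIntegral_congr_set Ico_ae_eq_Ioc, ← intervalIntegral.integral_of_le ht,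
    intervalIntegral.integral_const_mul, integral_rpow (Or.inl (by linarith)),
    Real.zero_rpow (by linarith : p + 1 ≠ 0)]
  ring

lemma aux_measurable_gammaPDF (a r : ℝ) : Measurable (gammaPDF a r) :=
  (measurable_gammaPDFReal a r).ennreal_ofReal

lemma aux_gamma_Iio_eq (m : ℝ) {t : ℝ} (ht : 0 ≤ t) :
    gammaMeasure m m (Set.Iio t) = ∫⁻ x in Set.Ico 0 t, gammaPDF m m x := by
  rw [gammaMeasure, withDensity_apply _ measurableSet_Iio, ← Set.Iio_union_Ico_eq_Iio ht,
    lintegral_union measurableSet_Ico (by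
      simp only [Set.disjoint_left, Set.mem_Iio, Set.mem_Ico]
      intro x hx h2; linarith [h2.1]),
    lintegral_gammaPDF_of_nonpos le_rfl, zero_add]

lemma aux_slice_upper (m : ℝ) (hm : 1 ≤ m) {t : ℝ} (ht : 0 ≤ t) :
    gammaMeasure m m (Set.Iio t) ≤
      ENNReal.ofReal (m ^ m / Real.Gamma m * (t ^ m / m)) := by
  have hm0 : (0:ℝ) < m := lt_of_lt_of_le one_pos hm
  have hc : 0 ≤ m ^ m / Real.Gamma m :=
    div_nonneg (Real.rpow_nonneg hm0.le m) (Real.Gamma_pos_of_pos hm0).le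
  rw [aux_gamma_Iio_eq m ht]
  calc ∫⁻ x in Set.Ico 0 t, gammaPDF m m x
      ≤ ∫⁻ x in Set.Ico 0 t, ENNReal.ofReal (m ^ m / Real.Gamma m * x ^ (m - 1)) := by
        refine setLIntegral_mono' measurableSet_Ico fun x hx => ?_
        rw [gammaPDF_of_nonneg hx.1]
        refine ENNReal.ofReal_le_ofReal ?_
        rw [mul_assoc]
        refine mul_le_mul_of_nonneg_left ?_ hc
        refine mul_le_of_le_one_right (Real.rpow_nonneg hx.1 _) ?_
        exact Real.exp_le_one_iff.mpr (by nlinarith [hx.1])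
    _ = ENNReal.ofReal (m ^ m / Real.Gamma m * (t ^ (m - 1 + 1) / (m - 1 + 1))) :=
        aux_lintegral_rpow _ hc (by linarith) ht
    _ = ENNReal.ofReal (m ^ m / Real.Gamma m * (t ^ m / m)) := by norm_num

lemma aux_slice_lower (m : ℝ) (hm : 1 ≤ m) {t : ℝ} (ht : 0 ≤ t) :
    ENNReal.ofReal (m ^ m / Real.Gamma m * (t ^ m / m) * Real.exp (-(m * t))) ≤
      gammaMeasure m m (Set.Iio t) := by
  have hm0 : (0:ℝ) < m := lt_of_lt_of_le one_pos hm
  have hc : 0 ≤ m ^ m / Real.Gamma m * Real.exp (-(m * t)) :=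
    mul_nonneg (div_nonneg (Real.rpow_nonneg hm0.le m) (Real.Gamma_pos_of_pos hm0).le)
      (Real.exp_pos _).le
  rw [aux_gamma_Iio_eq m ht]
  calc ENNReal.ofReal (m ^ m / Real.Gamma m * (t ^ m / m) * Real.exp (-(m * t)))
      = ENNReal.ofReal ((m ^ m / Real.Gamma m * Real.exp (-(m * t))) *
          (t ^ (m - 1 + 1) / (m - 1 + 1))) := by norm_num; ring_nf
    _ = ∫⁻ x in Set.Ico 0 t, ENNReal.ofReal
          ((m ^ m / Real.Gamma m * Real.exp (-(m * t))) * x ^ (m - 1)) :=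
        (aux_lintegral_rpow _ hc (by linarith) ht).symm
    _ ≤ ∫⁻ x in Set.Ico 0 t, gammaPDF m m x := by
        refine setLIntegral_mono' measurableSet_Ico fun x hx => ?_
        rw [gammaPDF_of_nonneg hx.1]
        refine ENNReal.ofReal_le_ofReal ?_
        have : Real.exp (-(m * t)) ≤ Real.exp (-(m * x)) := by
          apply Real.exp_le_exp.mpr; nlinarith [hx.2]
        calc m ^ m / Real.Gamma m * Real.exp (-(m * t)) * x ^ (m - 1)
            ≤ m ^ m / Real.Gamma m * Real.exp (-(m * x)) * x ^ (m - 1) := by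
              refine mul_le_mul_of_nonneg_right (mul_le_mul_of_nonneg_left this ?_) ?_
              · exact div_nonneg (Real.rpow_nonneg hm0.le m) (Real.Gamma_pos_of_pos hm0).le
              · exact Real.rpow_nonneg hx.1 _
          _ = m ^ m / Real.Gamma m * x ^ (m - 1) * Real.exp (-(m * x)) := by ring

lemma aux_lintegral_b (m : ℝ) (hm : 1 ≤ m) {b : ℝ → ℝ} (hb : Measurable b)
    {K a r : ℝ} (hK : 0 ≤ K) (ha : 0 < a) (hr : 0 < r)
    (hid : ∀ y, gammaPDFReal m m y * b y = K * gammaPDFReal a r y) :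
    ∫⁻ y, ENNReal.ofReal (b y) ∂(gammaMeasure m m) = ENNReal.ofReal K := by
  have hm0 : (0:ℝ) < m := lt_of_lt_of_le one_pos hm
  rw [gammaMeasure, lintegral_withDensity_eq_lintegral_mul _
    (aux_measurable_gammaPDF m m) hb.ennreal_ofReal]
  have hpt : ∀ y, (gammaPDF m m * fun y => ENNReal.ofReal (b y)) y =
      ENNReal.ofReal K * gammaPDF a r y := by
    intro y
    simp only [Pi.mul_apply, gammaPDF]
    rw [← ENNReal.ofReal_mul (gammaPDFReal_nonneg hm0 hm0 y), hid y,
      ENNReal.ofReal_mul hK]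
  simp_rw [hpt]
  rw [lintegral_const_mul _ (aux_measurable_gammaPDF a r),
    lintegral_gammaPDF_eq_one ha hr, mul_one]

lemma aux_idU (m : ℝ) (hm : 1 ≤ m) {θ : ℝ} (hθ : 0 < θ) (y : ℝ) :
    gammaPDFReal m m y * (if 0 ≤ y then m ^ m / Real.Gamma m * ((θ * y) ^ m / m) else 0) =
      (θ ^ m * (Real.Gamma (2 * m) / (m * Real.Gamma m ^ 2))) * gammaPDFReal (2 * m) m y := by
  have hm0 : (0:ℝ) < m := lt_of_lt_of_le one_pos hm
  have hΓm : Real.Gamma m ≠ 0 := (Real.Gamma_pos_of_pos hm0).ne'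
  have hΓ2m : Real.Gamma (2 * m) ≠ 0 :=
    (Real.Gamma_pos_of_pos (by linarith : (0:ℝ) < 2 * m)).ne'
  rcases le_or_gt 0 y with hy | hy
  · rcases eq_or_lt_of_le hy with h0 | hy0
    · subst h0
      simp [gammaPDFReal, mul_zero, Real.zero_rpow hm0.ne',
        Real.zero_rpow (show 2 * m - 1 ≠ 0 from ne_of_gt (by linarith))]
    · simp only [gammaPDFReal, if_pos hy]
      have hyy : y ^ (2 * m - 1) = y ^ (m - 1) * y ^ m := by
        rw [← Real.rpow_add hy0]; congr 1; ring
      have hmm : m ^ (2 * m) = m ^ m * m ^ m := by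
        rw [← Real.rpow_add hm0]; congr 1; ring
      rw [Real.mul_rpow hθ.le hy, hyy, hmm]
      field_simp
  · simp [gammaPDFReal, if_neg (not_le.mpr hy)]

lemma aux_idL (m : ℝ) (hm : 1 ≤ m) {θ : ℝ} (hθ : 0 < θ) (y : ℝ) :
    gammaPDFReal m m y * (if 0 ≤ y then
        m ^ m / Real.Gamma m * ((θ * y) ^ m / m) * Real.exp (-(m * (θ * y))) else 0) =
      (θ ^ m * (Real.Gamma (2 * m) / (m * Real.Gamma m ^ 2)) / (1 + θ) ^ (2 * m)) *
        gammaPDFReal (2 * m) (m * (1 + θ)) y := by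
  have hm0 : (0:ℝ) < m := lt_of_lt_of_le one_pos hm
  have hΓm : Real.Gamma m ≠ 0 := (Real.Gamma_pos_of_pos hm0).ne'
  have hΓ2m : Real.Gamma (2 * m) ≠ 0 :=
    (Real.Gamma_pos_of_pos (by linarith : (0:ℝ) < 2 * m)).ne'
  have h1θ : (0:ℝ) < 1 + θ := by linarith
  have h1θm : ((1:ℝ) + θ) ^ (2 * m) ≠ 0 := (Real.rpow_pos_of_pos h1θ _).ne'
  rcases le_or_gt 0 y with hy | hy
  · rcases eq_or_lt_of_le hy with h0 | hy0
    · subst h0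
      simp [gammaPDFReal, mul_zero, Real.zero_rpow hm0.ne',
        Real.zero_rpow (show 2 * m - 1 ≠ 0 from ne_of_gt (by linarith))]
    · simp only [gammaPDFReal, if_pos hy]
      have hyy : y ^ (2 * m - 1) = y ^ (m - 1) * y ^ m := by
        rw [← Real.rpow_add hy0]; congr 1; ring
      have hmm : (m * (1 + θ)) ^ (2 * m) = m ^ m * m ^ m * (1 + θ) ^ (2 * m) := by
        rw [Real.mul_rpow hm0.le h1θ.le, ← Real.rpow_add hm0]; congr 1; ring
      have hexp : Real.exp (-(m * (1 + θ) * y)) =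
          Real.exp (-(m * y)) * Real.exp (-(m * (θ * y))) := by
        rw [← Real.exp_add]; congr 1; ring
      rw [Real.mul_rpow hθ.le hy, hyy, hmm, hexp]
      field_simp
  · simp [gammaPDFReal, if_neg (not_le.mpr hy)]


/-- For i.i.d. h_a, h_b ~ Gamma(m, rate m) with m ≥ 1,
    lim_{θ→0+} P(h_a < θ h_b)/θ^m = Γ(2m)/(m Γ(m)²). -/
theorem stmt_2 {Ω : Type*} [MeasureSpace Ω] [IsProbabilityMeasure (ℙ : Measure Ω)]
    (m : ℝ) (hm : 1 ≤ m)
    (ha hb : Ω → ℝ) (hmeas_a : Measurable ha) (hmeas_b : Measurable hb)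
    (hdist_a : Measure.map ha ℙ = gammaMeasure m m)
    (hdist_b : Measure.map hb ℙ = gammaMeasure m m)
    (hindep : IndepFun ha hb ℙ) :
    Tendsto (fun θ : ℝ => (ℙ {ω | ha ω < θ * hb ω}).toReal / θ ^ m)
      (nhdsWithin 0 (Set.Ioi 0))
      (nhds (Real.Gamma (2 * m) / (m * Real.Gamma m ^ 2))) := by
  have hm0 : (0:ℝ) < m := lt_of_lt_of_le one_pos hm
  have hΓm : (0:ℝ) < Real.Gamma m := Real.Gamma_pos_of_pos hm0
  set L : ℝ := Real.Gamma (2 * m) / (m * Real.Gamma m ^ 2) with hLdef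
  have hL0 : 0 ≤ L :=
    div_nonneg (Real.Gamma_pos_of_pos (by linarith : (0:ℝ) < 2 * m)).le (by positivity)
  haveI : IsProbabilityMeasure (gammaMeasure m m) := isProbabilityMeasure_gammaMeasure hm0 hm0
  have hjoint : Measure.map (fun ω => (ha ω, hb ω)) ℙ
      = (gammaMeasure m m).prod (gammaMeasure m m) := by
    exact ((ProbabilityTheory.indepFun_iff_map_prod_eq_prod_map_map
      hmeas_a.aemeasurable hmeas_b.aemeasurable).mp hindep).trans
      (by rw [hdist_a, hdist_b])
  have hae : ∀ᵐ y ∂(gammaMeasure m m), 0 ≤ y := by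
    rw [ae_iff]
    have hs : {y : ℝ | ¬ 0 ≤ y} = Set.Iio 0 := by ext y; simp
    rw [hs, gammaMeasure, withDensity_apply _ measurableSet_Iio,
      lintegral_gammaPDF_of_nonpos le_rfl]
  have hP : ∀ θ : ℝ, ℙ {ω | ha ω < θ * hb ω}
      = ∫⁻ y, gammaMeasure m m (Set.Iio (θ * y)) ∂(gammaMeasure m m) := by
    intro θ
    have hSm : MeasurableSet {p : ℝ × ℝ | p.1 < θ * p.2} :=
      measurableSet_lt measurable_fst (measurable_snd.const_mul θ)
    have h1 : {ω | ha ω < θ * hb ω}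
        = (fun ω => (ha ω, hb ω)) ⁻¹' {p : ℝ × ℝ | p.1 < θ * p.2} := rfl
    rw [h1, ← Measure.map_apply (hmeas_a.prodMk hmeas_b) hSm, hjoint,
      Measure.prod_apply_symm hSm]
    rfl
  have key : ∀ θ : ℝ, 0 < θ →
      L / (1 + θ) ^ (2 * m) ≤ (ℙ {ω | ha ω < θ * hb ω}).toReal / θ ^ m ∧
      (ℙ {ω | ha ω < θ * hb ω}).toReal / θ ^ m ≤ L := by
    intro θ hθ
    have hθm : (0:ℝ) < θ ^ m := Real.rpow_pos_of_pos hθ m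
    have h1θm : (0:ℝ) < (1 + θ) ^ (2 * m) :=
      Real.rpow_pos_of_pos (by linarith) _
    have hub : ℙ {ω | ha ω < θ * hb ω} ≤ ENNReal.ofReal (θ ^ m * L) := by
      rw [hP θ]
      have step1 : ∫⁻ y, gammaMeasure m m (Set.Iio (θ * y)) ∂(gammaMeasure m m) ≤
          ∫⁻ y, ENNReal.ofReal
            (if 0 ≤ y then m ^ m / Real.Gamma m * ((θ * y) ^ m / m) else 0)
            ∂(gammaMeasure m m) := by
        refine lintegral_mono_ae ?_
        filter_upwards [hae] with y hy
        rw [if_pos hy]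
        exact aux_slice_upper m hm (mul_nonneg hθ.le hy)
      refine step1.trans_eq ?_
      refine aux_lintegral_b m hm ?_ (mul_nonneg hθm.le hL0) (by linarith) hm0
        (fun y => aux_idU m hm hθ y)
      exact Measurable.ite measurableSet_Ici
        ((((measurable_id.const_mul θ).pow_const m).div_const m).const_mul _) measurable_const
    have hlb : ENNReal.ofReal (θ ^ m * L / (1 + θ) ^ (2 * m)) ≤ ℙ {ω | ha ω < θ * hb ω} := by
      rw [hP θ]
      have step0 : ∫⁻ y, ENNReal.ofReal (if 0 ≤ y then
          m ^ m / Real.Gamma m * ((θ * y) ^ m / m) * Real.exp (-(m * (θ * y))) else 0)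
            ∂(gammaMeasure m m) = ENNReal.ofReal (θ ^ m * L / (1 + θ) ^ (2 * m)) := by
        refine aux_lintegral_b m hm ?_ ?_ (by linarith) (by positivity)
          (fun y => aux_idL m hm hθ y)
        · exact Measurable.ite measurableSet_Ici
            (((((measurable_id.const_mul θ).pow_const m).div_const m).const_mul _).mul
              (((measurable_id.const_mul θ).const_mul m).neg.exp)) measurable_const
        · exact div_nonneg (mul_nonneg hθm.le hL0) h1θm.le
      rw [← step0]
      refine lintegral_mono_ae ?_
      filter_upwards [hae] with y hy
      rw [if_pos hy]
      exact aux_slice_lower m hm (mul_nonneg hθ.le hy)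
    constructor
    · have h1 : θ ^ m * L / (1 + θ) ^ (2 * m) ≤ (ℙ {ω | ha ω < θ * hb ω}).toReal :=
        (ENNReal.ofReal_le_iff_le_toReal (measure_ne_top _ _)).mp hlb
      rw [le_div_iff₀ hθm]
      calc L / (1 + θ) ^ (2 * m) * θ ^ m = θ ^ m * L / (1 + θ) ^ (2 * m) := by ring
        _ ≤ _ := h1
    · have h2 : (ℙ {ω | ha ω < θ * hb ω}).toReal ≤ θ ^ m * L :=
        ENNReal.toReal_le_of_le_ofReal (mul_nonneg hθm.le hL0) hub
      rw [div_le_iff₀ hθm]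
      linarith [h2]
  have hcont : Tendsto (fun θ : ℝ => L / (1 + θ) ^ (2 * m))
      (nhdsWithin 0 (Set.Ioi 0)) (nhds L) := by
    have h1 : Tendsto (fun θ : ℝ => 1 + θ) (nhds 0) (nhds 1) := by
      simpa using (continuous_add_left (1:ℝ)).tendsto (0:ℝ)
    have h2 : Tendsto (fun θ : ℝ => (1 + θ) ^ (2 * m)) (nhds 0) (nhds 1) := by
      have h3 := (Real.continuousAt_rpow_const 1 (2 * m) (Or.inl one_ne_zero)).tendsto.comp h1
      simpa [Function.comp_def, Real.one_rpow] using h3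
    have h4 : Tendsto (fun θ : ℝ => L / (1 + θ) ^ (2 * m)) (nhds 0) (nhds L) := by
      have h5 := (tendsto_const_nhds (x := L)).div h2 one_ne_zero; rw [div_one] at h5; exact h5
    exact h4.mono_left nhdsWithin_le_nhds
  refine tendsto_of_tendsto_of_tendsto_of_le_of_le' hcont
    (tendsto_const_nhds.mono_left nhdsWithin_le_nhds) ?_ ?_
  · filter_upwards [eventually_mem_nhdsWithin] with θ hθ
    exact (key θ hθ).1
  · filter_upwards [eventually_mem_nhdsWithin] with θ hθ
    exact (key θ hθ).2
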